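/- Let E be a Hausdorff locally convex topological vector space over the real numbers. If E has a vector subspace F which, with the induced topology, is an infinite-dimensional Fréchet space, then E has 𝕋^ω as a quotient group; that is, there exists a group homomorphism R from (E, +) onto the topological group 𝕋^ω which is continuous, surjective, and an open map. -/

import Mathlib

open Filter Topology Set

lemma seminorm_sum_le {E : Type*} [AddCommGroup E] [Module ℝ E] {ι : Type*}
    (q : Seminorm ℝ E) (s : Finset ι) (g : ι → E) :
    q (∑ i ∈ s, g i) ≤ ∑ i ∈ s, q (g i) := by
  classical
  induction s using Finset.cons_induction with
  | empty => simp
  | cons a s ha ih =>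
    simp only [Finset.sum_cons]
    exact (map_add_le_add q _ _).trans (by linarith)

lemma cauchySeq_of_sub_mem {G : Type*} [AddCommGroup G] [UniformSpace G] [IsUniformAddGroup G]
    (S : ℕ → G) (h : ∀ W ∈ 𝓝 (0 : G), ∃ N, ∀ m, N ≤ m → ∀ n, N ≤ n → S m - S n ∈ W) :
    CauchySeq S := by
  refine ⟨map_neBot, ?_⟩
  rw [prod_map_map_eq, uniformity_eq_comap_nhds_zero, ← map_le_iff_le_comap, Filter.map_map]
  intro W hW
  obtain ⟨N, hN⟩ := h W (by exact hW)
  rw [mem_map]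
  have hmem : ({m : ℕ | N ≤ m} ×ˢ {n : ℕ | N ≤ n} : Set (ℕ × ℕ)) ∈ (atTop : Filter ℕ) ×ˢ atTop :=
    prod_mem_prod (eventually_ge_atTop N) (eventually_ge_atTop N)
  exact mem_of_superset hmem fun p hp => hN p.2 hp.2 p.1 hp.1

section Biorth
variable {E : Type*} [AddCommGroup E] [Module ℝ E] [TopologicalSpace E] [IsTopologicalAddGroup E]
    [ContinuousSMul ℝ E] [LocallyConvexSpace ℝ E] [T2Space E]

/-- biorthogonality predicate up to level `n` -/
def BioGood (F : Submodule ℝ E) (n : ℕ) (e : ℕ → E) (f : ℕ → E →L[ℝ] ℝ) : Prop :=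
  (∀ i < n, e i ∈ F) ∧ ∀ i < n, ∀ j < n, f i (e j) = if i = j then 1 else 0

lemma bio_step (F : Submodule ℝ E) (hF : ¬ FiniteDimensional ℝ F) (n : ℕ)
    (e : ℕ → E) (f : ℕ → E →L[ℝ] ℝ) (h : BioGood F n e f) :
    ∃ e' f', BioGood F (n + 1) e' f' ∧ (∀ i < n, e' i = e i) ∧ (∀ i < n, f' i = f i) := by
  obtain ⟨he, hef⟩ := h
  have hV : ∃ x : E, x ∈ F ∧ (∀ i < n, f i x = 0) ∧ x ≠ 0 := by
    by_contra hcon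
    push_neg at hcon
    apply hF
    have hinj : Function.Injective
        (LinearMap.pi (fun i : Fin n => (f i).toLinearMap.comp F.subtype)) := by
      rw [← LinearMap.ker_eq_bot, LinearMap.ker_eq_bot']
      intro m hm
      have hm' : ∀ i < n, f i (m : E) = 0 := by
        intro i hi
        have := congrFun hm ⟨i, hi⟩
        simpa using this
      have : (m : E) = 0 := hcon (m : E) m.2 hm'
      exact Subtype.ext this
    exact FiniteDimensional.of_injective _ hinj
  obtain ⟨x, hxF, hxker, hx0⟩ := hV
  obtain ⟨g₀, hg₀⟩ := SeparatingDual.exists_eq_one (R := ℝ) hx0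
  set g : E →L[ℝ] ℝ := g₀ - ∑ i ∈ Finset.range n, g₀ (e i) • f i with hg
  have hge : ∀ j < n, g (e j) = 0 := by
    intro j hj
    simp only [hg, ContinuousLinearMap.sub_apply, ContinuousLinearMap.coe_sum',
      Finset.sum_apply, ContinuousLinearMap.coe_smul', Pi.smul_apply, smul_eq_mul]
    rw [Finset.sum_eq_single j]
    · rw [hef j hj j hj]; simp
    · intro i hi hij
      rw [hef i (Finset.mem_range.1 hi) j hj, if_neg hij, mul_zero]
    · intro hj'; exact absurd (Finset.mem_range.2 hj) hj'
  have hgx : g x = 1 := by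
    simp only [hg, ContinuousLinearMap.sub_apply, ContinuousLinearMap.coe_sum',
      Finset.sum_apply, ContinuousLinearMap.coe_smul', Pi.smul_apply, smul_eq_mul]
    rw [hg₀, Finset.sum_eq_zero, sub_zero]
    intro i hi
    rw [hxker i (Finset.mem_range.1 hi), mul_zero]
  refine ⟨Function.update e n x, Function.update f n g, ⟨?_, ?_⟩, ?_, ?_⟩
  · intro i hi
    rcases Nat.lt_succ_iff_lt_or_eq.1 hi with hi | rfl
    · rw [Function.update_of_ne hi.ne]; exact he i hi
    · rw [Function.update_self]; exact hxF
  · intro i hi j hj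
    rcases Nat.lt_succ_iff_lt_or_eq.1 hi with hi | rfl <;>
      rcases Nat.lt_succ_iff_lt_or_eq.1 hj with hj | hj
    · rw [Function.update_of_ne hi.ne, Function.update_of_ne hj.ne]
      exact hef i hi j hj
    · subst hj
      rw [Function.update_of_ne hi.ne, Function.update_self, hxker i hi, if_neg hi.ne]
    · rw [Function.update_self, Function.update_of_ne hj.ne, hge j hj, if_neg hj.ne']
    · subst hj
      rw [Function.update_self, Function.update_self, hgx, if_pos rfl]
  · intro i hi; exact Function.update_of_ne hi.ne _ _
  · intro i hi; exact Function.update_of_ne hi.ne _ _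

noncomputable def bioAux (F : Submodule ℝ E) (hF : ¬ FiniteDimensional ℝ F) :
    (n : ℕ) → {p : (ℕ → E) × (ℕ → E →L[ℝ] ℝ) // BioGood F n p.1 p.2}
  | 0 => ⟨(fun _ => 0, fun _ => 0), by constructor <;> (intro i hi; exact absurd hi (Nat.not_lt_zero i))⟩
  | (n + 1) => by
      obtain ⟨p, hp⟩ := bioAux F hF n
      exact ⟨(Classical.choose (bio_step F hF n p.1 p.2 hp),
              Classical.choose (Classical.choose_spec (bio_step F hF n p.1 p.2 hp))),
             (Classical.choose_spec (Classical.choose_spec (bio_step F hF n p.1 p.2 hp))).1⟩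

lemma bioAux_coher (F : Submodule ℝ E) (hF : ¬ FiniteDimensional ℝ F) (n : ℕ) :
    (∀ i < n, ((bioAux F hF (n+1)).1.1 i = (bioAux F hF n).1.1 i ∧
      (bioAux F hF (n+1)).1.2 i = (bioAux F hF n).1.2 i)) := by
  intro i hi
  have hs := (Classical.choose_spec (Classical.choose_spec
    (bio_step F hF n (bioAux F hF n).1.1 (bioAux F hF n).1.2 (bioAux F hF n).2))).2
  constructor
  · show (bioAux F hF (n+1)).1.1 i = _
    rw [show (bioAux F hF (n+1)) = _ from rfl]
    exact hs.1 i hi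
  · exact hs.2 i hi

/-- Existence of a biorthogonal system: `e n ∈ F`, `f i (e j) = δᵢⱼ`. -/
lemma exists_biorthogonal (F : Submodule ℝ E) (hF : ¬ FiniteDimensional ℝ F) :
    ∃ (e : ℕ → E) (f : ℕ → E →L[ℝ] ℝ), (∀ n, e n ∈ F) ∧
      ∀ i j, f i (e j) = if i = j then 1 else 0 := by
  set e : ℕ → E := fun i => (bioAux F hF (i+1)).1.1 i with he
  set f : ℕ → E →L[ℝ] ℝ := fun i => (bioAux F hF (i+1)).1.2 i with hf
  have stab : ∀ n i, i < n → (bioAux F hF n).1.1 i = e i ∧ (bioAux F hF n).1.2 i = f i := by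
    intro n
    induction n with
    | zero => intro i hi; exact absurd hi (Nat.not_lt_zero i)
    | succ n ih =>
      intro i hi
      rcases Nat.lt_succ_iff_lt_or_eq.1 hi with hi | rfl
      · obtain ⟨h1, h2⟩ := bioAux_coher F hF n i hi
        exact ⟨h1.trans (ih i hi).1, h2.trans (ih i hi).2⟩
      · exact ⟨rfl, rfl⟩
  refine ⟨e, f, ?_, ?_⟩
  · intro n
    have := (bioAux F hF (n+1)).2.1 n (Nat.lt_succ_self n)
    rwa [(stab (n+1) n (Nat.lt_succ_self n)).1] at this
  · intro i j
    set n := max i j + 1 with hn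
    have hi : i < n := Nat.lt_succ_of_le (le_max_left i j)
    have hj : j < n := Nat.lt_succ_of_le (le_max_right i j)
    have := (bioAux F hF n).2.2 i hi j hj
    rwa [(stab n i hi).2, (stab n j hj).1] at this

end Biorth


set_option maxHeartbeats 2000000 in
/-- **Theorem (Gabriyelyan–Morris).** Let `E` be a Hausdorff locally convex topological
vector space over `ℝ`.  If `E` has a vector subspace `F` which, with the induced topology,
is an infinite-dimensional Fréchet space (i.e. complete, metrizable, and not
finite-dimensional), then `E` has `𝕋^ω` as a quotient group: there is a continuous,
surjective, open group homomorphism from `(E, +)` onto `ℕ → AddCircle (1 : ℝ)`. -/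
theorem frechet_subspace_implies_torus_quotient
    (E : Type*) [AddCommGroup E] [Module ℝ E] [UniformSpace E] [IsUniformAddGroup E]
    [ContinuousSMul ℝ E] [LocallyConvexSpace ℝ E] [T2Space E]
    (F : Submodule ℝ E)
    (hF_complete : IsComplete (F : Set E))
    (hF_metrizable : TopologicalSpace.MetrizableSpace F)
    (hF_infdim : ¬ FiniteDimensional ℝ F) :
    ∃ R : E →+ (ℕ → AddCircle (1 : ℝ)),
      Continuous R ∧ Function.Surjective R ∧ IsOpenMap R := by
  haveI : Fact ((0:ℝ) < 1) := ⟨zero_lt_one⟩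
  -- Step 1: countable neighborhood basis of 0 in F and associated abs convex sets in E
  obtain ⟨b, hb⟩ := (𝓝 (0 : F)).exists_antitone_basis
  have hVex : ∀ k : ℕ, ∃ V : Set E, (V ∈ 𝓝 (0:E) ∧ Balanced ℝ V ∧ Convex ℝ V) ∧
      ∀ x : F, (x : E) ∈ V → x ∈ b k := by
    intro k
    have hbk : b k ∈ 𝓝 (0 : F) := hb.1.mem_of_mem trivial
    rw [nhds_induced ((↑) : F → E) 0] at hbk
    obtain ⟨W, hW, hWsub⟩ := Filter.mem_comap.1 hbk
    rw [show ((0 : F) : E) = 0 by simp] at hW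
    obtain ⟨V, ⟨hV1, hV2, hV3⟩, hVW⟩ := (nhds_hasBasis_absConvex ℝ E).mem_iff.1 hW
    exact ⟨V, ⟨hV1, hV2, hV3⟩, fun x hx => hWsub (hVW hx)⟩
  choose V hV hVb using hVex
  have hV1 : ∀ k, V k ∈ 𝓝 (0:E) := fun k => (hV k).1
  have habs : ∀ k, Absorbent ℝ (V k) := fun k => absorbent_nhds_zero (hV1 k)
  set q : ℕ → Seminorm ℝ E := fun k => gaugeSeminorm (hV k).2.1 (hV k).2.2 (habs k) with hqdef
  have hq_lt : ∀ k (x : E), q k x < 1 → x ∈ V k := by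
    intro k x hx
    exact gauge_lt_one_subset_self (hV k).2.2 (mem_of_mem_nhds (hV1 k)) (habs k) hx
  have hq_cont : ∀ k, Continuous (q k) := by
    intro k
    exact continuous_gauge (hV k).2.2 (hV1 k)
  have hbasis : ∀ W ∈ 𝓝 (0 : E), ∃ k, ∀ x : E, x ∈ F → q k x < 1 → x ∈ W := by
    intro W hW
    have hWF : ((↑) : F → E) ⁻¹' W ∈ 𝓝 (0 : F) := by
      have h0 : Tendsto ((↑) : F → E) (𝓝 0) (𝓝 (0:E)) := by
        simpa using (continuous_subtype_val.tendsto (0 : F))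
      exact h0 hW
    obtain ⟨k, -, hk⟩ := hb.1.mem_iff.1 hWF
    exact ⟨k, fun x hxF hxq => hk (hVb k ⟨x, hxF⟩ (hq_lt k x hxq))⟩
  -- Step 2: biorthogonal system, rescaled
  obtain ⟨e₀, f₀, he₀, hf₀⟩ := exists_biorthogonal F hF_infdim
  set M : ℕ → ℝ := fun n => 1 + ∑ k ∈ Finset.range (n+1), q k (e₀ n) with hMdef
  have hM0 : ∀ n, 0 < M n := by
    intro n
    have : (0:ℝ) ≤ ∑ k ∈ Finset.range (n+1), q k (e₀ n) :=
      Finset.sum_nonneg fun k _ => apply_nonneg _ _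
    simp only [hMdef]; linarith
  set c : ℕ → ℝ := fun n => (2:ℝ)⁻¹^n / M n with hcdef
  have hc0 : ∀ n, 0 < c n := fun n => div_pos (by positivity) (hM0 n)
  set e : ℕ → E := fun n => c n • e₀ n with hedef
  set f : ℕ → E →L[ℝ] ℝ := fun n => (c n)⁻¹ • f₀ n with hfdef
  have he : ∀ n, e n ∈ F := fun n => Submodule.smul_mem _ _ (he₀ n)
  have hf : ∀ i j, f i (e j) = if i = j then 1 else 0 := by
    intro i j
    simp only [hfdef, hedef, ContinuousLinearMap.smul_apply, map_smul, smul_eq_mul, hf₀ i j]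
    rcases eq_or_ne i j with rfl | hij
    · simp only [if_pos rfl]
      field_simp
      exact div_self (hc0 i).ne'
    · simp only [if_neg hij]
      ring
  have hqe : ∀ k n, k ≤ n → q k (e n) ≤ (2:ℝ)⁻¹^n := by
    intro k n hkn
    have h1 : q k (e n) = c n * q k (e₀ n) := by
      simp only [hedef, map_smul_eq_mul, Real.norm_eq_abs, abs_of_pos (hc0 n)]
    have h2 : q k (e₀ n) ≤ M n := by
      have : q k (e₀ n) ≤ ∑ k' ∈ Finset.range (n+1), q k' (e₀ n) :=
        Finset.single_le_sum (fun k' _ => apply_nonneg _ _) (Finset.mem_range.2 (Nat.lt_succ_of_le hkn))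
      simp only [hMdef]; linarith
    rw [h1, hcdef]
    calc (2:ℝ)⁻¹^n / M n * q k (e₀ n) ≤ (2:ℝ)⁻¹^n / M n * M n := by
          apply mul_le_mul_of_nonneg_left h2 (le_of_lt (hc0 n))
      _ = (2:ℝ)⁻¹^n := div_mul_cancel₀ _ (hM0 n).ne'
  -- Step 3: key summation lemma
  have key : ∀ t : ℕ → ℝ, (∀ n, |t n| ≤ 1) → ∃ x, x ∈ F ∧ (∀ i, (f i) x = t i) ∧
      ∀ k C, (∀ m, q k (∑ j ∈ Finset.range m, t j • e j) ≤ C) → q k x ≤ C := by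
    intro t ht
    set S : ℕ → E := fun m => ∑ j ∈ Finset.range m, t j • e j with hSdef
    have hSF : ∀ m, S m ∈ F := fun m => sum_mem fun j _ => Submodule.smul_mem _ _ (he j)
    have hterm : ∀ k j, k ≤ j → q k (t j • e j) ≤ (2:ℝ)⁻¹^j := by
      intro k j hkj
      rw [map_smul_eq_mul, Real.norm_eq_abs]
      calc |t j| * q k (e j) ≤ 1 * q k (e j) :=
            mul_le_mul_of_nonneg_right (ht j) (apply_nonneg _ _)
        _ = q k (e j) := one_mul _
        _ ≤ (2:ℝ)⁻¹^j := hqe k j hkj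
    have hdiff : ∀ k n m, k ≤ n → n ≤ m → q k (S m - S n) ≤ (2:ℝ)⁻¹^n * 2 := by
      intro k n m hkn hnm
      have hsub : S m - S n = ∑ j ∈ Finset.Ico n m, t j • e j := by
        rw [hSdef]; exact (Finset.sum_Ico_eq_sub _ hnm).symm
      rw [hsub]
      calc q k (∑ j ∈ Finset.Ico n m, t j • e j) ≤ ∑ j ∈ Finset.Ico n m, q k (t j • e j) :=
            seminorm_sum_le _ _ _
        _ ≤ ∑ j ∈ Finset.Ico n m, (2:ℝ)⁻¹^j := Finset.sum_le_sum fun j hj =>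
            hterm k j (le_trans hkn (Finset.mem_Ico.1 hj).1)
        _ ≤ (2:ℝ)⁻¹^n / (1 - 2⁻¹) := geom_sum_Ico_le_of_lt_one (by norm_num) (by norm_num)
        _ = (2:ℝ)⁻¹^n * 2 := by rw [show (1:ℝ)-2⁻¹ = 2⁻¹ by norm_num, div_eq_mul_inv, inv_inv]
    have hcauchy : CauchySeq S := by
      apply cauchySeq_of_sub_mem
      intro W hW
      obtain ⟨k, hk⟩ := hbasis W hW
      refine ⟨max k 2, fun m hm n hn => ?_⟩
      have hkm : k ≤ max k 2 := le_max_left _ _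
      have hsmall : q k (S m - S n) < 1 := by
        have hN2 : ((2:ℝ)⁻¹)^(max k 2) * 2 < 1 := by
          have : ((2:ℝ)⁻¹)^(max k 2) ≤ ((2:ℝ)⁻¹)^2 :=
            pow_le_pow_of_le_one (by norm_num) (by norm_num) (le_max_right _ _)
          nlinarith
        rcases le_total n m with hnm | hmn
        · have := hdiff k n m (le_trans hkm hn) hnm
          have hmono : ((2:ℝ)⁻¹)^n * 2 ≤ ((2:ℝ)⁻¹)^(max k 2) * 2 := by
            have : ((2:ℝ)⁻¹)^n ≤ ((2:ℝ)⁻¹)^(max k 2) :=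
              pow_le_pow_of_le_one (by norm_num) (by norm_num) hn
            nlinarith
          linarith
        · have := hdiff k m n (le_trans hkm hm) hmn
          have hmono : ((2:ℝ)⁻¹)^m * 2 ≤ ((2:ℝ)⁻¹)^(max k 2) * 2 := by
            have : ((2:ℝ)⁻¹)^m ≤ ((2:ℝ)⁻¹)^(max k 2) :=
              pow_le_pow_of_le_one (by norm_num) (by norm_num) hm
            nlinarith
          have hneg : q k (S m - S n) = q k (S n - S m) := by
            rw [← map_neg_eq_map, neg_sub]
          linarith
      exact hk _ (sub_mem (hSF m) (hSF n)) hsmall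
    obtain ⟨x, hxF, hx⟩ := hF_complete (Filter.map S atTop) hcauchy
      (le_principal_iff.2 (Filter.mem_map.2 (Filter.Eventually.of_forall hSF)))
    have hxt : Tendsto S atTop (𝓝 x) := hx
    refine ⟨x, hxF, ?_, ?_⟩
    · intro i
      have h1 : Tendsto (fun m => (f i) (S m)) atTop (𝓝 ((f i) x)) :=
        ((f i).continuous.tendsto x).comp hxt
      have h2 : ∀ m, i < m → (f i) (S m) = t i := by
        intro m him
        rw [hSdef]
        simp only [map_sum, map_smul, smul_eq_mul]
        rw [Finset.sum_eq_single i]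
        · rw [hf i i, if_pos rfl, mul_one]
        · intro j hj hji
          rw [hf i j, if_neg (Ne.symm hji), mul_zero]
        · intro hi; exact absurd (Finset.mem_range.2 him) hi
      have h3 : Tendsto (fun m => (f i) (S m)) atTop (𝓝 (t i)) := by
        apply Tendsto.congr' _ tendsto_const_nhds
        filter_upwards [eventually_gt_atTop i] with m hm
        exact (h2 m hm).symm
      exact tendsto_nhds_unique h1 h3
    · intro k C hC
      have h1 : Tendsto (fun m => q k (S m)) atTop (𝓝 (q k x)) :=
        ((hq_cont k).tendsto x).comp hxt
      exact le_of_tendsto h1 (Filter.Eventually.of_forall hC)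
  -- Step 4: the homomorphism R
  set R : E →+ (ℕ → AddCircle (1:ℝ)) :=
    { toFun := fun x n => ((f n x : ℝ) : AddCircle (1:ℝ))
      map_zero' := by funext n; simp
      map_add' := by intro a b; funext n; simp } with hRdef
  have hRapp : ∀ (x : E) (n : ℕ), R x n = ((f n x : ℝ) : AddCircle (1:ℝ)) := fun x n => rfl
  have hmkc : Continuous ((↑) : ℝ → AddCircle (1:ℝ)) := AddCircle.continuous_mk' 1
  have hmko : IsOpenMap ((↑) : ℝ → AddCircle (1:ℝ)) := QuotientAddGroup.isOpenMap_coe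
  have hRc : Continuous R := continuous_pi fun n => hmkc.comp (f n).continuous
  -- surjectivity
  have hRsurj : Function.Surjective R := by
    intro y
    set t : ℕ → ℝ := fun n => ((AddCircle.equivIco 1 0 (y n) : ℝ)) with htdef
    have ht : ∀ n, |t n| ≤ 1 := by
      intro n
      have h2 := (AddCircle.equivIco 1 0 (y n)).2
      rw [abs_le]; constructor
      · linarith [h2.1]
      · linarith [h2.2]
    have hyt : ∀ n, ((t n : ℝ) : AddCircle (1:ℝ)) = y n := by
      intro n
      have := (AddCircle.equivIco 1 0).symm_apply_apply (y n)
      rwa [show ∀ z, (AddCircle.equivIco 1 0).symm z = ((z : ℝ) : AddCircle (1:ℝ)) from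
        fun z => rfl] at this
    obtain ⟨x, hxF, hfx, -⟩ := key t ht
    exact ⟨x, funext fun n => by rw [hRapp, hfx n, hyt n]⟩
  -- openness at 0
  have hopen0 : ∀ U ∈ 𝓝 (0:E), R '' U ∈ 𝓝 (0 : ℕ → AddCircle (1:ℝ)) := by
    intro U hU
    obtain ⟨k, hk⟩ := hbasis U hU
    set N : ℕ := max (k+1) 3 with hNdef
    have hkN : k ≤ N := le_trans (Nat.le_succ k) (le_max_left _ _)
    set C : ℝ := 1 + ∑ j ∈ Finset.range N, q k (e j) with hCdef
    have hC0 : 0 < C := by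
      have : (0:ℝ) ≤ ∑ j ∈ Finset.range N, q k (e j) :=
        Finset.sum_nonneg fun j _ => apply_nonneg _ _
      simp only [hCdef]; linarith
    set δ : ℝ := (1/2) * min (1/C) 1 with hδdef
    have hδ0 : 0 < δ := by
      apply mul_pos (by norm_num)
      exact lt_min (one_div_pos.2 hC0) one_pos
    have hδ1 : δ ≤ 1 := by
      have : min (1/C) 1 ≤ 1 := min_le_right _ _
      simp only [hδdef]; linarith
    have hδC : δ * C ≤ 1/2 := by
      have h1 : min (1/C) 1 ≤ 1/C := min_le_left _ _
      have : δ ≤ (1/2) * (1/C) := by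
        simp only [hδdef]
        linarith [h1]
      calc δ * C ≤ (1/2) * (1/C) * C := mul_le_mul_of_nonneg_right this (le_of_lt hC0)
        _ = 1/2 := by field_simp
    set s : Set (AddCircle (1:ℝ)) := ((↑) : ℝ → AddCircle (1:ℝ)) '' Ioo (-δ) δ with hsdef
    have hs : s ∈ 𝓝 (0 : AddCircle (1:ℝ)) := by
      have hopen : IsOpen s := hmko _ isOpen_Ioo
      apply hopen.mem_nhds
      exact ⟨0, ⟨neg_neg_iff_pos.2 hδ0, hδ0⟩, by simp⟩
    have hT : ({n | n < N}).pi (fun _ => s) ∈ 𝓝 (0 : ℕ → AddCircle (1:ℝ)) :=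
      set_pi_mem_nhds (finite_lt_nat N) (fun i _ => hs)
    refine Filter.mem_of_superset hT ?_
    intro y hy
    have hrep : ∀ n, ∃ r : ℝ, |r| ≤ 1 ∧ ((r : AddCircle (1:ℝ)) = y n) ∧ (n < N → |r| ≤ δ) := by
      intro n
      by_cases hn : n < N
      · obtain ⟨r, hr, hry⟩ := hy n hn
        have habs : |r| ≤ δ := by
          rw [abs_le]; exact ⟨le_of_lt hr.1, le_of_lt hr.2⟩
        exact ⟨r, le_trans habs hδ1, hry, fun _ => habs⟩
      · refine ⟨((AddCircle.equivIco 1 0 (y n) : ℝ)), ?_, ?_, fun h => absurd h hn⟩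
        · have h2 := (AddCircle.equivIco 1 0 (y n)).2
          rw [abs_le]; constructor
          · linarith [h2.1]
          · linarith [h2.2]
        · have := (AddCircle.equivIco 1 0).symm_apply_apply (y n)
          rwa [show ∀ z, (AddCircle.equivIco 1 0).symm z = ((z : ℝ) : AddCircle (1:ℝ)) from
            fun z => rfl] at this
    choose t ht1 ht2 ht3 using hrep
    obtain ⟨x, hxF, hfx, hq⟩ := key t ht1
    have hqx : q k x ≤ 3/4 := by
      apply hq
      intro m
      calc q k (∑ j ∈ Finset.range m, t j • e j) ≤ ∑ j ∈ Finset.range m, q k (t j • e j) :=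
            seminorm_sum_le _ _ _
        _ ≤ 3/4 := by
            rw [← Finset.sum_filter_add_sum_filter_not (Finset.range m) (fun j => j < N)]
            have hsub1 : (Finset.range m).filter (fun j => j < N) ⊆ Finset.range N := by
              intro j hj
              simp only [Finset.mem_filter, Finset.mem_range] at hj ⊢
              exact hj.2
            have h1 : ∑ j ∈ (Finset.range m).filter (fun j => j < N), q k (t j • e j)
                ≤ δ * ∑ j ∈ Finset.range N, q k (e j) := by
              calc ∑ j ∈ (Finset.range m).filter (fun j => j < N), q k (t j • e j)
                  ≤ ∑ j ∈ (Finset.range m).filter (fun j => j < N), δ * q k (e j) := by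
                    apply Finset.sum_le_sum
                    intro j hj
                    simp only [Finset.mem_filter, Finset.mem_range] at hj
                    rw [map_smul_eq_mul, Real.norm_eq_abs]
                    exact mul_le_mul_of_nonneg_right (ht3 j hj.2) (apply_nonneg _ _)
                _ ≤ ∑ j ∈ Finset.range N, δ * q k (e j) := by
                    apply Finset.sum_le_sum_of_subset_of_nonneg hsub1
                    intro j _ _
                    exact mul_nonneg (le_of_lt hδ0) (apply_nonneg _ _)
                _ = δ * ∑ j ∈ Finset.range N, q k (e j) := (Finset.mul_sum _ _ _).symm
            have heq2 : (Finset.range m).filter (fun j => ¬ j < N) = Finset.Ico N m := by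
              ext j
              simp only [Finset.mem_filter, Finset.mem_range, Finset.mem_Ico, not_lt]
              tauto
            have h2 : ∑ j ∈ (Finset.range m).filter (fun j => ¬ j < N), q k (t j • e j)
                ≤ (2:ℝ)⁻¹^N * 2 := by
              rw [heq2]
              calc ∑ j ∈ Finset.Ico N m, q k (t j • e j)
                  ≤ ∑ j ∈ Finset.Ico N m, (2:ℝ)⁻¹^j := by
                    apply Finset.sum_le_sum
                    intro j hj
                    have hkj : k ≤ j := le_trans hkN (Finset.mem_Ico.1 hj).1
                    rw [map_smul_eq_mul, Real.norm_eq_abs]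
                    calc |t j| * q k (e j) ≤ 1 * q k (e j) :=
                          mul_le_mul_of_nonneg_right (ht1 j) (apply_nonneg _ _)
                      _ = q k (e j) := one_mul _
                      _ ≤ (2:ℝ)⁻¹^j := hqe k j hkj
                _ ≤ (2:ℝ)⁻¹^N / (1 - 2⁻¹) := geom_sum_Ico_le_of_lt_one (by norm_num) (by norm_num)
                _ = (2:ℝ)⁻¹^N * 2 := by rw [show (1:ℝ)-2⁻¹ = 2⁻¹ by norm_num, div_eq_mul_inv, inv_inv]
            have h3 : ((2:ℝ)⁻¹)^N ≤ ((2:ℝ)⁻¹)^3 :=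
              pow_le_pow_of_le_one (by norm_num) (by norm_num) (le_max_right _ _)
            have hδs : δ * ∑ j ∈ Finset.range N, q k (e j) ≤ 1/2 := by
              have : δ * ∑ j ∈ Finset.range N, q k (e j) ≤ δ * C := by
                apply mul_le_mul_of_nonneg_left _ (le_of_lt hδ0)
                simp only [hCdef]; linarith [Finset.sum_nonneg
                  (fun j (_ : j ∈ Finset.range N) => apply_nonneg (q k) (e j))]
              linarith
            have h4 : ((2:ℝ)⁻¹)^3 = 1/8 := by norm_num
            linarith
    have hxU : x ∈ U := hk x hxF (lt_of_le_of_lt hqx (by norm_num))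
    refine ⟨x, hxU, ?_⟩
    funext n
    rw [hRapp, hfx n, ht2 n]
  -- conclude: R is an open map
  have hRopen : IsOpenMap R := by
    intro U hUopen
    rw [isOpen_iff_mem_nhds]
    rintro _ ⟨x, hxU, rfl⟩
    have h1 : (fun z : E => z - x) '' U ∈ 𝓝 (0 : E) := by
      have hopen : IsOpen ((fun z : E => z - x) '' U) :=
        (Homeomorph.subRight x).isOpenMap U hUopen
      exact hopen.mem_nhds ⟨x, hxU, sub_self x⟩
    have h2 := hopen0 _ h1
    have h4 : (fun w => w + R x) '' (R '' ((fun z : E => z - x) '' U)) ∈ 𝓝 (R x) := by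
      have := (Homeomorph.addRight (R x)).isOpenMap.image_mem_nhds h2
      simpa using this
    refine Filter.mem_of_superset h4 ?_
    rintro _ ⟨_, ⟨_, ⟨u, huU, rfl⟩, rfl⟩, rfl⟩
    exact ⟨u, huU, by simp [map_sub, sub_add_cancel]⟩
  exact ⟨R, hRc, hRsurj, hRopen⟩
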